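/- arXiv:2404.18332 — 2 statements merged into one kernel-verified Lean document; each statement's English description precedes it below -/
import Mathlib

section
/- Let K ⊆ ℝⁿ be a nonempty compact set, let a₁,…,a_m and R be real polynomials in n variables of degree at most d, suppose R(x) > 0 for all x ∈ K, and suppose there exists at least one Borel measure μ₀ supported in K with ∫ aᵢ dμ₀ = bᵢ for i = 1,…,m. Then the infimum of ∫ R dμ over all Borel measures μ supported in K satisfying ∫ aᵢ dμ = bᵢ for i = 1,…,m is attained by some such measure, and this minimum value equals the supremum of b₁λ₁ + ⋯ + b_mλ_m over all λ = (λ₁,…,λ_m) ∈ ℝᵐ such that R(x) − Σᵢ₌₁ᵐ λᵢ aᵢ(x) ≥ 0 for every x ∈ K. -/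
open MeasureTheory Set

lemma isCompact_convexHull_of_isCompact {E : Type*} [NormedAddCommGroup E] [NormedSpace ℝ E]
    [FiniteDimensional ℝ E] {s : Set E} (hs : IsCompact s) : IsCompact (convexHull ℝ s) := by
  classical
  rcases s.eq_empty_or_nonempty with rfl | ⟨x₀, hx₀⟩
  · simpa [convexHull_empty] using isCompact_empty
  set N := Module.finrank ℝ E + 1 with hN
  have hT : IsCompact ((stdSimplex ℝ (Fin N)) ×ˢ (Set.univ.pi fun _ : Fin N => s)) :=
    (isCompact_stdSimplex (𝕜 := ℝ) (ι := Fin N)).prod (isCompact_univ_pi fun _ => hs)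
  have hΦ : Continuous (fun p : (Fin N → ℝ) × (Fin N → E) => ∑ i, p.1 i • p.2 i) := by
    refine continuous_finset_sum _ fun i _ => ?_
    exact ((continuous_apply i).comp continuous_fst).smul ((continuous_apply i).comp continuous_snd)
  have himg : convexHull ℝ s = (fun p : (Fin N → ℝ) × (Fin N → E) => ∑ i, p.1 i • p.2 i) ''
      ((stdSimplex ℝ (Fin N)) ×ˢ (Set.univ.pi fun _ : Fin N => s)) := by
    apply Set.Subset.antisymm
    · intro x hx
      obtain ⟨ι, hfin, z, w, hzs, hai, hw0, hw1, hwz⟩ := eq_pos_convex_span_of_mem_convexHull hx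
      have hcard : Fintype.card ι ≤ N := by
        refine hai.card_le_finrank_succ.trans ?_
        exact Nat.add_le_add_right (Submodule.finrank_le _) 1
      obtain ⟨e⟩ : Nonempty (ι ↪ Fin N) :=
        Function.Embedding.nonempty_of_card_le (by simpa using hcard)
      set w' : Fin N → ℝ := fun j => ∑ i ∈ Finset.univ.filter (fun i => e i = j), w i with hw'
      set z' : Fin N → E := fun j => if h : ∃ i, e i = j then z h.choose else x₀ with hz'
      have hze : ∀ i, z' (e i) = z i := by
        intro i
        have h : ∃ i', e i' = e i := ⟨i, rfl⟩
        show (if h : ∃ i', e i' = e i then z h.choose else x₀) = z i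
        rw [dif_pos h]
        exact congrArg z (e.injective h.choose_spec)
      refine ⟨(w', z'), ⟨⟨fun j => Finset.sum_nonneg fun i _ => (hw0 i).le, ?_⟩, ?_⟩, ?_⟩
      · rw [show ∑ j, w' j = ∑ j : Fin N, ∑ i ∈ Finset.univ.filter (fun i => e i = j), w i from rfl,
          Finset.sum_fiberwise]
        exact hw1
      · intro j _
        simp only [hz']
        split_ifs with h
        · exact hzs ⟨_, rfl⟩
        · exact hx₀
      · have : ∑ j, w' j • z' j = ∑ i, w i • z i := by
          calc ∑ j, w' j • z' j
              = ∑ j : Fin N, ∑ i ∈ Finset.univ.filter (fun i => e i = j), w i • z' (e i) := by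
                refine Finset.sum_congr rfl fun j _ => ?_
                rw [hw', Finset.sum_smul]
                refine Finset.sum_congr rfl fun i hi => ?_
                rw [(Finset.mem_filter.mp hi).2]
            _ = ∑ i, w i • z' (e i) := Finset.sum_fiberwise _ _ _
            _ = ∑ i, w i • z i := by simp [hze]
        simpa [this] using hwz
    · rintro _ ⟨⟨w, zp⟩, ⟨⟨hw0, hw1⟩, hz⟩, rfl⟩
      exact mem_convexHull_of_exists_fintype w zp hw0 hw1
        (fun i => hz i (Set.mem_univ i)) rfl
  rw [himg]
  exact hT.image hΦ

lemma integrable_of_suppK {X : Type*} [MeasurableSpace X] [TopologicalSpace X]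
    [OpensMeasurableSpace X] [T2Space X] {K : Set X} (hK : IsCompact K)
    {F : Type*} [NormedAddCommGroup F] {g : X → F} (hg : Continuous g)
    (μ : Measure X) [IsFiniteMeasure μ] (hμ : μ Kᶜ = 0) : Integrable g μ := by
  have hae : ∀ᵐ x ∂μ, x ∈ K := by
    rw [MeasureTheory.ae_iff]
    exact hμ
  rw [← Measure.restrict_eq_self_of_ae_mem hae]
  exact hg.continuousOn.integrableOn_compact hK

lemma cone_convex {m : ℕ} (C : Set ((Fin m → ℝ) × ℝ)) (hC : Convex ℝ C) :
    Convex ℝ {z | ∃ c : ℝ, 0 ≤ c ∧ ∃ y ∈ C, z = c • y} := by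
  rintro z₁ ⟨c₁, hc₁, y₁, hy₁, rfl⟩ z₂ ⟨c₂, hc₂, y₂, hy₂, rfl⟩ α β hα hβ hαβ
  rcases eq_or_lt_of_le (by positivity : (0:ℝ) ≤ α * c₁ + β * c₂) with hd | hd
  · have h1 : α * c₁ = 0 := by nlinarith
    have h2 : β * c₂ = 0 := by nlinarith
    refine ⟨0, le_refl 0, y₁, hy₁, ?_⟩
    rw [smul_smul, smul_smul, h1, h2]
    simp
  · refine ⟨α * c₁ + β * c₂, hd.le, (α * c₁ / (α * c₁ + β * c₂)) • y₁ +
      (β * c₂ / (α * c₁ + β * c₂)) • y₂, hC hy₁ hy₂ (by positivity) (by positivity)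
        (by field_simp), ?_⟩
    rw [smul_add, smul_smul, smul_smul, smul_smul, smul_smul]
    congr 1 <;> congr 1 <;> field_simp

lemma cone_closed {m : ℕ} (C : Set ((Fin m → ℝ) × ℝ)) (hC : IsCompact C) {ε : ℝ} (hε : 0 < ε)
    (hCε : ∀ y ∈ C, ε ≤ y.2) :
    IsClosed {z | ∃ c : ℝ, 0 ≤ c ∧ ∃ y ∈ C, z = c • y} := by
  apply IsSeqClosed.isClosed
  intro zs z hz hlim
  choose c hc0 y hyC hzy using hz
  obtain ⟨y₀, hy₀C, φ, hφ, hyt⟩ := hC.tendsto_subseq hyC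
  have hy₀ : (0:ℝ) < y₀.2 := hε.trans_le (hCε _ hy₀C)
  have hzt : Filter.Tendsto (fun k => zs (φ k)) Filter.atTop (nhds z) :=
    hlim.comp hφ.tendsto_atTop
  have hz2 : Filter.Tendsto (fun k => (zs (φ k)).2) Filter.atTop (nhds z.2) :=
    (continuous_snd.tendsto z).comp hzt
  have hy2 : Filter.Tendsto (fun k => (y (φ k)).2) Filter.atTop (nhds y₀.2) :=
    (continuous_snd.tendsto y₀).comp hyt
  have hcval : ∀ k, c k = (zs k).2 / (y k).2 := by
    intro k
    have hyk : (0:ℝ) < (y k).2 := hε.trans_le (hCε _ (hyC k))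
    rw [hzy k]
    field_simp
    rfl
  have hct : Filter.Tendsto (fun k => c (φ k)) Filter.atTop (nhds (z.2 / y₀.2)) := by
    simp only [hcval]
    exact hz2.div hy2 hy₀.ne'
  have hsm : Filter.Tendsto (fun k => c (φ k) • y (φ k)) Filter.atTop
      (nhds ((z.2 / y₀.2) • y₀)) := hct.smul hyt
  have hzeq : z = (z.2 / y₀.2) • y₀ := by
    refine tendsto_nhds_unique ?_ hsm
    simpa only [← hzy] using hzt
  have hz2nn : 0 ≤ z.2 := by
    have h3 : ∀ k, 0 ≤ (zs k).2 := by
      intro k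
      rw [hzy k]
      have hyk : (0:ℝ) < (y k).2 := hε.trans_le (hCε _ (hyC k))
      exact mul_nonneg (hc0 k) hyk.le
    exact le_of_tendsto_of_tendsto tendsto_const_nhds hz2
      (Filter.Eventually.of_forall fun k => h3 (φ k))
  exact ⟨z.2 / y₀.2, div_nonneg hz2nn hy₀.le, y₀, hy₀C, hzeq⟩

lemma memA {n m : ℕ} {K : Set (Fin n → ℝ)} (hKne : K.Nonempty) (hK : IsCompact K)
    {v : (Fin n → ℝ) → ((Fin m → ℝ) × ℝ)} (hv : Continuous v)
    (μ : Measure (Fin n → ℝ)) [IsFiniteMeasure μ] (hμ : μ Kᶜ = 0) :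
    ∃ c : ℝ, 0 ≤ c ∧ ∃ y ∈ convexHull ℝ (v '' K), ∫ x, v x ∂μ = c • y := by
  by_cases hzero : μ = 0
  · exact ⟨0, le_rfl, v hKne.choose,
      subset_convexHull ℝ _ ⟨_, hKne.choose_spec, rfl⟩, by simp [hzero]⟩
  · haveI : NeZero μ := ⟨hzero⟩
    set ν := (μ univ)⁻¹ • μ with hν
    have hνK : ν Kᶜ = 0 := by simp [hν, Measure.smul_apply, hμ]
    have hint : Integrable v ν := integrable_of_suppK hK hv ν hνK
    have haeν : ∀ᵐ x ∂ν, v x ∈ convexHull ℝ (v '' K) := by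
      have h1 : ∀ᵐ x ∂ν, x ∈ K := by
        rw [MeasureTheory.ae_iff]
        exact hνK
      filter_upwards [h1] with x hx
      exact subset_convexHull ℝ _ (mem_image_of_mem _ hx)
    have hmem : ∫ x, v x ∂ν ∈ convexHull ℝ (v '' K) :=
      (convex_convexHull ℝ _).integral_mem
        (isCompact_convexHull_of_isCompact (hK.image hv)).isClosed haeν hint
    refine ⟨(μ univ).toReal, ENNReal.toReal_nonneg, _, hmem, ?_⟩
    have h2 : ∫ x, v x ∂ν = ((μ univ)⁻¹).toReal • ∫ x, v x ∂μ := by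
      rw [hν, integral_smul_measure]
    rw [h2, smul_smul, ENNReal.toReal_inv]
    have ht : (μ univ).toReal ≠ 0 := by
      simp [ENNReal.toReal_eq_zero_iff, measure_ne_top, Measure.measure_univ_eq_zero, hzero]
    rw [mul_inv_cancel₀ ht, one_smul]

lemma repB {n m : ℕ} {K : Set (Fin n → ℝ)} (hKcl : IsClosed K)
    {v : (Fin n → ℝ) → ((Fin m → ℝ) × ℝ)}
    {z : (Fin m → ℝ) × ℝ}
    (hz : ∃ c : ℝ, 0 ≤ c ∧ ∃ y ∈ convexHull ℝ (v '' K), z = c • y) :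
    ∃ μ : Measure (Fin n → ℝ), IsFiniteMeasure μ ∧ μ Kᶜ = 0 ∧ Integrable v μ ∧
      ∫ x, v x ∂μ = z := by
  classical
  obtain ⟨c, hc, y, hy, rfl⟩ := hz
  rw [mem_convexHull_iff_exists_fintype] at hy
  obtain ⟨ι, hfin, w, p, hw0, hw1, hp, hsum⟩ := hy
  choose x hxK hvx using hp
  set μ : Measure (Fin n → ℝ) := ∑ i, (ENNReal.ofReal (c * w i)) • Measure.dirac (x i) with hμdef
  have hdint : ∀ i : ι, Integrable v ((ENNReal.ofReal (c * w i)) • Measure.dirac (x i)) := by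
    intro i
    exact ((integrable_const (v (x i))).congr (ae_eq_dirac v).symm).smul_measure
      ENNReal.ofReal_ne_top
  have hfinμ : IsFiniteMeasure μ := by
    constructor
    rw [hμdef, Measure.finset_sum_apply]
    refine ENNReal.sum_lt_top.mpr fun i _ => ?_
    simp [Measure.smul_apply]
  have hμK : μ Kᶜ = 0 := by
    rw [hμdef, Measure.finset_sum_apply]
    refine Finset.sum_eq_zero fun i _ => ?_
    rw [Measure.smul_apply, Measure.dirac_apply' _ hKcl.measurableSet.compl]
    rw [Set.indicator_of_notMem (by simp [hxK i])]
    simp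
  haveI := hfinμ
  have hint : Integrable v μ := by
    rw [hμdef]
    exact integrable_finset_sum_measure.mpr fun i _ => hdint i
  refine ⟨μ, hfinμ, hμK, hint, ?_⟩
  rw [hμdef, integral_finset_sum_measure fun i _ => hdint i]
  have h5 : ∀ i : ι, ∫ x', v x' ∂((ENNReal.ofReal (c * w i)) • Measure.dirac (x i)) =
      (c * w i) • p i := by
    intro i
    rw [integral_smul_measure, integral_dirac, hvx i,
      ENNReal.toReal_ofReal (mul_nonneg hc (hw0 i))]
  rw [Finset.sum_congr rfl fun i _ => h5 i]
  rw [← hsum, Finset.smul_sum]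
  refine Finset.sum_congr rfl fun i _ => ?_
  rw [smul_smul]

lemma bridgeC {n m : ℕ} {K : Set (Fin n → ℝ)} (hK : IsCompact K)
    (a : Fin m → MvPolynomial (Fin n) ℝ) (R : MvPolynomial (Fin n) ℝ)
    (μ : Measure (Fin n → ℝ)) [IsFiniteMeasure μ] (hμ : μ Kᶜ = 0) :
    ∫ x, ((fun i => MvPolynomial.eval x (a i), MvPolynomial.eval x R) :
        (Fin m → ℝ) × ℝ) ∂μ =
      (fun i => ∫ x, MvPolynomial.eval x (a i) ∂μ, ∫ x, MvPolynomial.eval x R ∂μ) := by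
  have hF : Integrable (fun x => (fun i => MvPolynomial.eval x (a i) : Fin m → ℝ)) μ :=
    integrable_of_suppK hK (continuous_pi fun i => MvPolynomial.continuous_eval (a i)) μ hμ
  have hG : Integrable (fun x => MvPolynomial.eval x R) μ :=
    integrable_of_suppK hK (MvPolynomial.continuous_eval R) μ hμ
  rw [integral_pair hF hG]
  refine Prod.ext ?_ rfl
  funext i
  have := (ContinuousLinearMap.proj (R := ℝ) (φ := fun _ : Fin m => ℝ) i).integral_comp_comm hF
  simpa using this.symm

theorem stmt_0 (n m d : ℕ) (K : Set (Fin n → ℝ)) (hKne : K.Nonempty) (hK : IsCompact K)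
    (a : Fin m → MvPolynomial (Fin n) ℝ) (R : MvPolynomial (Fin n) ℝ)
    (ha : ∀ i, (a i).totalDegree ≤ d) (hR : R.totalDegree ≤ d)
    (hRpos : ∀ x ∈ K, 0 < MvPolynomial.eval x R)
    (b : Fin m → ℝ)
    (hfeas : ∃ μ₀ : Measure (Fin n → ℝ), IsFiniteMeasure μ₀ ∧ μ₀ Kᶜ = 0 ∧
      ∀ i, ∫ x, MvPolynomial.eval x (a i) ∂μ₀ = b i) :
    (∃ μ : Measure (Fin n → ℝ), IsFiniteMeasure μ ∧ μ Kᶜ = 0 ∧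
        (∀ i, ∫ x, MvPolynomial.eval x (a i) ∂μ = b i) ∧
        ∫ x, MvPolynomial.eval x R ∂μ =
          sInf {r : ℝ | ∃ ν : Measure (Fin n → ℝ), IsFiniteMeasure ν ∧ ν Kᶜ = 0 ∧
            (∀ i, ∫ x, MvPolynomial.eval x (a i) ∂ν = b i) ∧
            r = ∫ x, MvPolynomial.eval x R ∂ν}) ∧
    sInf {r : ℝ | ∃ ν : Measure (Fin n → ℝ), IsFiniteMeasure ν ∧ ν Kᶜ = 0 ∧
        (∀ i, ∫ x, MvPolynomial.eval x (a i) ∂ν = b i) ∧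
        r = ∫ x, MvPolynomial.eval x R ∂ν} =
      sSup {s : ℝ | ∃ lam : Fin m → ℝ,
        (∀ x ∈ K, 0 ≤ MvPolynomial.eval x R - ∑ i, lam i * MvPolynomial.eval x (a i)) ∧
        s = ∑ i, b i * lam i} := by
  classical
  set v : (Fin n → ℝ) → ((Fin m → ℝ) × ℝ) :=
    fun x => (fun i => MvPolynomial.eval x (a i), MvPolynomial.eval x R) with hvdef
  have hvc : Continuous v :=
    (continuous_pi fun i => MvPolynomial.continuous_eval (a i)).prodMk
      (MvPolynomial.continuous_eval R)
  set C : Set ((Fin m → ℝ) × ℝ) := convexHull ℝ (v '' K) with hCdef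
  set S : Set ((Fin m → ℝ) × ℝ) := {z | ∃ c : ℝ, 0 ≤ c ∧ ∃ y ∈ C, z = c • y} with hSdef
  -- the minimum of R on K
  obtain ⟨x₀, hx₀K, hx₀min⟩ :=
    hK.exists_isMinOn hKne (MvPolynomial.continuous_eval R).continuousOn
  set ε : ℝ := MvPolynomial.eval x₀ R with hεdef
  have hεpos : 0 < ε := hRpos x₀ hx₀K
  have hεK : ∀ x ∈ K, ε ≤ MvPolynomial.eval x R := fun x hx => hx₀min hx
  have hCε : ∀ y ∈ C, ε ≤ y.2 := by
    have hsub : C ⊆ {y : (Fin m → ℝ) × ℝ | ε ≤ y.2} := by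
      rw [hCdef]
      refine convexHull_min ?_ ?_
      · rintro _ ⟨x, hx, rfl⟩
        exact hεK x hx
      · intro y hy z hz α β hα hβ hαβ
        simp only [mem_setOf_eq] at hy hz ⊢
        have : (α • y + β • z).2 = α * y.2 + β * z.2 := rfl
        rw [this]
        nlinarith
    exact fun y hy => hsub hy
  have hSconv : Convex ℝ S := cone_convex C (by rw [hCdef]; exact convex_convexHull ℝ _)
  have hCcomp : IsCompact C := by
    rw [hCdef]; exact isCompact_convexHull_of_isCompact (hK.image hvc)
  have hScl : IsClosed S := cone_closed C hCcomp hεpos hCε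
  set P : Set ℝ := {r : ℝ | ∃ ν : Measure (Fin n → ℝ), IsFiniteMeasure ν ∧ ν Kᶜ = 0 ∧
      (∀ i, ∫ x, MvPolynomial.eval x (a i) ∂ν = b i) ∧
      r = ∫ x, MvPolynomial.eval x R ∂ν} with hPdef
  set D : Set ℝ := {s : ℝ | ∃ lam : Fin m → ℝ,
      (∀ x ∈ K, 0 ≤ MvPolynomial.eval x R - ∑ i, lam i * MvPolynomial.eval x (a i)) ∧
      s = ∑ i, b i * lam i} with hDdef
  have hPS : ∀ r : ℝ, r ∈ P ↔ ((b, r) : (Fin m → ℝ) × ℝ) ∈ S := by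
    intro r
    constructor
    · rintro ⟨ν, hν1, hν2, hν3, rfl⟩
      haveI := hν1
      obtain ⟨c, hc, y, hy, heq⟩ := memA hKne hK hvc ν hν2
      refine ⟨c, hc, y, hy, ?_⟩
      rw [← heq, bridgeC hK a R ν hν2]
      refine Prod.ext ?_ rfl
      funext i
      exact (hν3 i).symm
    · rintro ⟨c, hc, y, hy, heq⟩
      obtain ⟨μ, h1, h2, h3, h4⟩ := repB hK.isClosed ⟨c, hc, y, hy, heq⟩
      haveI := h1
      have h5 : (fun i => ∫ x, MvPolynomial.eval x (a i) ∂μ,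
          ∫ x, MvPolynomial.eval x R ∂μ) = ((b, r) : (Fin m → ℝ) × ℝ) := by
        rw [← bridgeC hK a R μ h2]
        exact h4
      refine ⟨μ, h1, h2, fun i => ?_, ?_⟩
      · exact congrFun (congrArg Prod.fst h5) i
      · exact (congrArg Prod.snd h5).symm
  have hPne : P.Nonempty := by
    obtain ⟨μ₀, h1, h2, h3⟩ := hfeas
    exact ⟨_, μ₀, h1, h2, h3, rfl⟩
  have hPbd : BddBelow P := by
    refine ⟨0, fun r hr => ?_⟩
    obtain ⟨c, hc, y, hy, heq⟩ := (hPS r).1 hr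
    have h2 : r = c * y.2 := congrArg Prod.snd heq
    rw [h2]
    exact mul_nonneg hc (hεpos.le.trans (hCε y hy))
  have hPcl : IsClosed P := by
    have : P = (fun r : ℝ => ((b, r) : (Fin m → ℝ) × ℝ)) ⁻¹' S := by
      ext r
      exact hPS r
    rw [this]
    exact hScl.preimage (continuous_const.prodMk continuous_id)
  have hinfP : sInf P ∈ P := hPcl.csInf_mem hPne hPbd
  -- weak duality
  have hweak : ∀ r ∈ P, ∀ s ∈ D, s ≤ r := by
    rintro r ⟨ν, h1, h2, h3, rfl⟩ s ⟨lam, hlam, rfl⟩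
    haveI := h1
    have haeK : ∀ᵐ x ∂ν, x ∈ K := by
      rw [MeasureTheory.ae_iff]
      exact h2
    have hintR : Integrable (fun x => MvPolynomial.eval x R) ν :=
      integrable_of_suppK hK (MvPolynomial.continuous_eval R) ν h2
    have hintA : ∀ i : Fin m, Integrable (fun x => MvPolynomial.eval x (a i)) ν :=
      fun i => integrable_of_suppK hK (MvPolynomial.continuous_eval (a i)) ν h2
    have hintS : Integrable (fun x => ∑ i, lam i * MvPolynomial.eval x (a i)) ν :=
      integrable_finset_sum _ fun i _ => (hintA i).const_mul _
    have hmono : ∫ x, (∑ i, lam i * MvPolynomial.eval x (a i)) ∂ν ≤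
        ∫ x, MvPolynomial.eval x R ∂ν := by
      refine integral_mono_ae hintS hintR ?_
      filter_upwards [haeK] with x hx
      linarith [hlam x hx]
    calc ∑ i, b i * lam i = ∑ i, lam i * ∫ x, MvPolynomial.eval x (a i) ∂ν := by
          refine Finset.sum_congr rfl fun i _ => ?_
          rw [h3 i, mul_comm]
      _ = ∑ i, ∫ x, lam i * MvPolynomial.eval x (a i) ∂ν := by
          refine Finset.sum_congr rfl fun i _ => ?_
          rw [integral_const_mul]
      _ = ∫ x, (∑ i, lam i * MvPolynomial.eval x (a i)) ∂ν :=
          (integral_finset_sum _ fun i _ => (hintA i).const_mul _).symm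
      _ ≤ ∫ x, MvPolynomial.eval x R ∂ν := hmono
  have hD0 : (0:ℝ) ∈ D := by
    refine ⟨fun _ => 0, fun x hx => by simpa using (hRpos x hx).le, by simp⟩
  have hDne : D.Nonempty := ⟨0, hD0⟩
  have hDbd : BddAbove D := by
    obtain ⟨r₀, hr₀⟩ := hPne
    exact ⟨r₀, fun s hs => hweak r₀ hr₀ s hs⟩
  refine ⟨?_, ?_⟩
  · obtain ⟨ν, h1, h2, h3, h4⟩ := hinfP
    exact ⟨ν, h1, h2, h3, h4.symm⟩
  · refine le_antisymm ?_ (le_csInf hPne fun r hr => csSup_le hDne fun s hs => hweak r hr s hs)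
    refine le_of_forall_lt fun p hp => ?_
    -- p < sInf P; show p < sSup D
    have hbp : ((b, p) : (Fin m → ℝ) × ℝ) ∉ S := by
      intro hmem
      exact absurd (csInf_le hPbd ((hPS p).2 hmem)) (not_le.mpr hp)
    obtain ⟨f, u, hfS, hfu⟩ := geometric_hahn_banach_closed_point hSconv hScl hbp
    have h0S : ((0, 0) : (Fin m → ℝ) × ℝ) ∈ S := by
      refine ⟨0, le_rfl, v x₀, ?_, by simp⟩
      rw [hCdef]
      exact subset_convexHull ℝ _ ⟨x₀, hx₀K, rfl⟩
    have hu0 : 0 < u := by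
      have := hfS _ h0S
      simpa [Prod.mk_zero_zero] using this
    have hSsmul : ∀ z ∈ S, ∀ t : ℝ, 0 ≤ t → t • z ∈ S := by
      rintro z ⟨c, hc, y, hy, rfl⟩ t ht
      exact ⟨t * c, mul_nonneg ht hc, y, hy, smul_smul t c y⟩
    have hfle : ∀ z ∈ S, f z ≤ 0 := by
      intro z hz
      by_contra h
      push_neg at h
      have hscale : ((u / f z + 1) : ℝ) • z ∈ S :=
        hSsmul z hz _ (by positivity)
      have h2 := hfS _ hscale
      rw [_root_.map_smul, smul_eq_mul] at h2
      have h3 : (u / f z + 1) * f z = u + f z := by field_simp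
      rw [h3] at h2
      linarith
    set lam0 : ℝ := f ((0 : Fin m → ℝ), (1:ℝ)) with hlam0
    set cc : Fin m → ℝ :=
      fun i => f ((fun j => if i = j then 1 else 0 : Fin m → ℝ), 0) with hccdef
    have key : ∀ (y : Fin m → ℝ) (t : ℝ), f (y, t) = (∑ i, y i * cc i) + t * lam0 := by
      intro y t
      have h1 : ((y, t) : (Fin m → ℝ) × ℝ) = (y, 0) + (0, t) := by simp
      rw [h1, map_add]
      have h2 : ((0, t) : (Fin m → ℝ) × ℝ) = t • ((0 : Fin m → ℝ), (1:ℝ)) := by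
        simp [Prod.smul_mk]
      rw [h2, _root_.map_smul, smul_eq_mul]
      congr 1
      have h3 := LinearMap.pi_apply_eq_sum_univ
        ((f : ((Fin m → ℝ) × ℝ) →ₗ[ℝ] ℝ).comp (LinearMap.inl ℝ (Fin m → ℝ) ℝ)) y
      simpa [cc, smul_eq_mul] using h3
    have hxK' : ∀ x ∈ K,
        (∑ i, MvPolynomial.eval x (a i) * cc i) + MvPolynomial.eval x R * lam0 ≤ 0 := by
      intro x hx
      have hvS : v x ∈ S := by
        refine ⟨1, zero_le_one, v x, ?_, (one_smul _ _).symm⟩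
        rw [hCdef]
        exact subset_convexHull ℝ _ ⟨x, hx, rfl⟩
      have h2 := hfle _ hvS
      rw [show v x = ((fun i => MvPolynomial.eval x (a i)), MvPolynomial.eval x R) from rfl,
        key] at h2
      exact h2
    have hbS : ((b, sInf P) : (Fin m → ℝ) × ℝ) ∈ S := (hPS _).1 hinfP
    have h1 : (∑ i, b i * cc i) + sInf P * lam0 ≤ 0 := by
      have := hfle _ hbS
      rwa [key] at this
    have h2 : u < (∑ i, b i * cc i) + p * lam0 := by
      have := hfu
      rwa [key] at this
    have hlam0neg : lam0 < 0 := by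
      by_contra hh
      push_neg at hh
      have : p * lam0 ≤ sInf P * lam0 := mul_le_mul_of_nonneg_right hp.le hh
      linarith
    set τ : ℝ := -lam0 with hτ
    have hτpos : 0 < τ := by simp [hτ]; linarith
    have hmemD : (∑ i, b i * (cc i / τ)) ∈ D := by
      refine ⟨fun i => cc i / τ, fun x hx => ?_, rfl⟩
      have h4 := hxK' x hx
      have h5 : ∑ i, cc i / τ * MvPolynomial.eval x (a i) =
          (∑ i, MvPolynomial.eval x (a i) * cc i) / τ := by
        rw [Finset.sum_div]
        refine Finset.sum_congr rfl fun i _ => ?_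
        ring
      rw [h5, sub_nonneg, div_le_iff₀ hτpos]
      have : MvPolynomial.eval x R * τ = -(MvPolynomial.eval x R * lam0) := by rw [hτ]; ring
      linarith
    refine lt_of_lt_of_le ?_ (le_csSup hDbd hmemD)
    have hsum : ∑ i, b i * (cc i / τ) = (∑ i, b i * cc i) / τ := by
      rw [Finset.sum_div]
      refine Finset.sum_congr rfl fun i _ => ?_
      ring
    rw [hsum, lt_div_iff₀ hτpos]
    have : p * τ = -(p * lam0) := by rw [hτ]; ring
    linarith
end

section
/- Let K ⊆ ℝⁿ be a nonempty compact set, let a₁,…,a_m be real polynomials of degree at most d, and let b ∈ ℝᵐ. Let F be the set of all truncated multi-sequences y of degree d that admit a K-representing measure and satisfy ⟨aᵢ, y⟩ = bᵢ for i = 1,…,m. If y* is an extreme point of the convex set F, then y* admits a K-representing measure that is r-atomic with r ≤ m; that is, there exist r ≤ m distinct points u₁,…,u_r ∈ K and positive weights λ₁,…,λ_r > 0 such that y*_α = Σⱼ₌₁ʳ λⱼ uⱼ^α for every multi-index α with |α| ≤ d. -/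
open MeasureTheory
open Set

theorem aux_isCompact_convexHull {E : Type*} [NormedAddCommGroup E] [NormedSpace ℝ E]
    [FiniteDimensional ℝ E] {t : Set E} (ht : IsCompact t) :
    IsCompact (convexHull ℝ t) := by
  classical
  set D := Module.finrank ℝ E + 1 with hD
  have himg : convexHull ℝ t =
      (fun p : (Fin D → ℝ) × (Fin D → E) => ∑ i, p.1 i • p.2 i) ''
        ((stdSimplex ℝ (Fin D)) ×ˢ (Set.univ.pi fun _ : Fin D => t)) := by
    apply Subset.antisymm
    · intro x hx
      obtain ⟨ι, hfin, z, w, hzt, haff, hwpos, hwsum, hsum⟩ :=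
        eq_pos_convex_span_of_mem_convexHull hx
      letI := hfin
      have hne : Nonempty ι := by
        by_contra h
        rw [not_nonempty_iff] at h
        simp [Finset.univ_eq_empty] at hwsum
      obtain ⟨i₀⟩ := hne
      have hcard : Fintype.card ι ≤ D := by
        refine le_trans haff.card_le_finrank_succ ?_
        exact Nat.add_le_add_right (Submodule.finrank_le _) 1
      obtain ⟨e⟩ := Function.Embedding.nonempty_of_card_le
        (by simpa using hcard : Fintype.card ι ≤ Fintype.card (Fin D))
      obtain ⟨w', hwe, hw0⟩ : ∃ w' : Fin D → ℝ,
          (∀ i, w' (e i) = w i) ∧ (∀ j, (¬∃ i, e i = j) → w' j = 0) := by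
        refine ⟨fun j => if h : ∃ i, e i = j then w h.choose else 0, fun i => ?_, fun j hj => ?_⟩
        · have h : ∃ i', e i' = e i := ⟨i, rfl⟩
          simp only [dif_pos h]
          rw [e.injective h.choose_spec]
        · simp only [dif_neg hj]
      obtain ⟨z', hze, hzmem⟩ : ∃ z' : Fin D → E,
          (∀ i, z' (e i) = z i) ∧ (∀ j, z' j ∈ t) := by
        refine ⟨fun j => if h : ∃ i, e i = j then z h.choose else z i₀, fun i => ?_, fun j => ?_⟩
        · have h : ∃ i', e i' = e i := ⟨i, rfl⟩
          simp only [dif_pos h]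
          rw [e.injective h.choose_spec]
        · by_cases h : ∃ i, e i = j
          · simp only [dif_pos h]; exact hzt ⟨_, rfl⟩
          · simp only [dif_neg h]; exact hzt ⟨i₀, rfl⟩
      have key : ∀ (g : Fin D → ℝ),
          (∀ j, (¬ ∃ i, e i = j) → g j = 0) → ∑ j, g j = ∑ i, g (e i) := by
        intro g hg
        have h1 : ∑ i, g (e i) = ∑ j ∈ Finset.univ.image e, g j :=
          (Finset.sum_image (fun a _ b _ h => e.injective h)).symm
        rw [h1]
        refine (Finset.sum_subset (Finset.subset_univ _) ?_).symm
        intro j _ hj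
        refine hg j ?_
        intro ⟨i, hi⟩
        exact hj (Finset.mem_image.2 ⟨i, Finset.mem_univ _, hi⟩)
      have keyE : ∀ (g : Fin D → E),
          (∀ j, (¬ ∃ i, e i = j) → g j = 0) → ∑ j, g j = ∑ i, g (e i) := by
        intro g hg
        have h1 : ∑ i, g (e i) = ∑ j ∈ Finset.univ.image e, g j :=
          (Finset.sum_image (fun a _ b _ h => e.injective h)).symm
        rw [h1]
        refine (Finset.sum_subset (Finset.subset_univ _) ?_).symm
        intro j _ hj
        refine hg j ?_
        intro ⟨i, hi⟩
        exact hj (Finset.mem_image.2 ⟨i, Finset.mem_univ _, hi⟩)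
      have hstd : w' ∈ stdSimplex ℝ (Fin D) := by
        constructor
        · intro j
          by_cases h : ∃ i, e i = j
          · obtain ⟨i, rfl⟩ := h; rw [hwe]; exact (hwpos _).le
          · rw [hw0 j h]
        · rw [key w' hw0]
          simp only [hwe]; exact hwsum
      have hxeq : ∑ j, w' j • z' j = x := by
        rw [keyE (fun j => w' j • z' j) (fun j hj => by show w' j • z' j = 0; rw [hw0 j hj, zero_smul])]
        simp only [hwe, hze]; exact hsum
      exact ⟨(w', z'), ⟨hstd, fun j _ => hzmem j⟩, hxeq⟩
    · rintro x ⟨⟨w, zf⟩, ⟨hw, hz⟩, rfl⟩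
      exact (convex_convexHull ℝ t).sum_mem (fun i _ => hw.1 i) hw.2
        (fun i _ => subset_convexHull ℝ t (hz i (mem_univ i)))
  rw [himg]
  exact ((isCompact_stdSimplex ℝ (Fin D)).prod (isCompact_univ_pi fun _ => ht)).image (by
    exact continuous_finset_sum _ fun i _ =>
      ((continuous_apply i).comp continuous_fst).smul
        ((continuous_apply i).comp continuous_snd))

theorem stmt_2 (n m d : ℕ) (K : Set (Fin n → ℝ)) (hKne : K.Nonempty) (hK : IsCompact K)
    (a : Fin m → MvPolynomial (Fin n) ℝ) (ha : ∀ j, (a j).totalDegree ≤ d)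
    (b : Fin m → ℝ)
    (F : Set ({α : Fin n →₀ ℕ // (∑ i, α i) ≤ d} → ℝ))
    (hF : F = {y | (∃ μ : Measure (Fin n → ℝ), IsFiniteMeasure μ ∧ μ Kᶜ = 0 ∧
        ∀ α : {α : Fin n →₀ ℕ // (∑ i, α i) ≤ d},
          Integrable (fun x => ∏ i, x i ^ α.1 i) μ ∧
          y α = ∫ x, ∏ i, x i ^ α.1 i ∂μ) ∧
      (∀ j : Fin m, (∑ α ∈ (a j).support, if h : (∑ i, α i) ≤ d
          then (a j).coeff α * y ⟨α, h⟩ else 0) = b j)})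
    (ystar : {α : Fin n →₀ ℕ // (∑ i, α i) ≤ d} → ℝ)
    (hy : ystar ∈ F.extremePoints ℝ) :
    ∃ r : ℕ, r ≤ m ∧ ∃ (u : Fin r → (Fin n → ℝ)) (lam : Fin r → ℝ),
      Function.Injective u ∧ (∀ j, u j ∈ K) ∧ (∀ j, 0 < lam j) ∧
      ∀ α : {α : Fin n →₀ ℕ // (∑ i, α i) ≤ d},
        ystar α = ∑ j, lam j * ∏ i, (u j) i ^ α.1 i := by
  classical
  obtain ⟨hyF, hext⟩ := hy
  rw [hF] at hyF
  obtain ⟨⟨μ, hμfin, hμK, hμint⟩, hconstr⟩ := hyF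
  haveI := hμfin
  haveI : Finite {α : Fin n →₀ ℕ // (∑ i, α i) ≤ d} := by
    have hlt : ∀ (α : {α : Fin n →₀ ℕ // (∑ i, α i) ≤ d}) (i : Fin n), α.1 i < d + 1 := by
      intro α i
      exact Nat.lt_succ_of_le (le_trans (Finset.single_le_sum
        (f := fun i => α.1 i) (fun _ _ => Nat.zero_le _) (Finset.mem_univ i)) α.2)
    apply Finite.of_injective (fun α (i : Fin n) => (⟨α.1 i, hlt α i⟩ : Fin (d+1)))
    intro α β h
    apply Subtype.ext
    ext i
    exact congrArg Fin.val (congrFun h i)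
  haveI : Fintype {α : Fin n →₀ ℕ // (∑ i, α i) ≤ d} := Fintype.ofFinite _
  have hvcont : Continuous (fun (x : Fin n → ℝ) =>
      (fun α : {α : Fin n →₀ ℕ // (∑ i, α i) ≤ d} => ∏ i, x i ^ α.1 i)) :=
    continuous_pi fun α => continuous_finset_prod _ fun i _ => (continuous_apply i).pow _
  -- Step 1 : existence of a finitely-atomic representation
  have step1 : ∃ (S : Finset (Fin n → ℝ)) (w : (Fin n → ℝ) → ℝ), (↑S ⊆ K ∧
      (∀ x ∈ S, 0 < w x) ∧
      ∀ α : {α : Fin n →₀ ℕ // (∑ i, α i) ≤ d},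
        ystar α = ∑ x ∈ S, w x * ∏ i, x i ^ α.1 i) := by
    rcases eq_or_ne (μ Set.univ) 0 with hμ0 | hμ0
    · have hμz : μ = 0 := Measure.measure_univ_eq_zero.1 hμ0
      refine ⟨∅, fun _ => 1, by simp, by simp, fun α => ?_⟩
      rw [(hμint α).2, hμz]
      simp
    · have hμtop : μ Set.univ ≠ ⊤ := (measure_lt_top μ _).ne
      set ν : Measure (Fin n → ℝ) := (μ Set.univ)⁻¹ • μ with hν
      haveI : IsProbabilityMeasure ν := ⟨by
        rw [hν, Measure.smul_apply, smul_eq_mul, ENNReal.inv_mul_cancel hμ0 hμtop]⟩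
      have haeK : ∀ᵐ x ∂ν, x ∈ K := by
        rw [ae_iff]
        have hc : {x | ¬ x ∈ K} = Kᶜ := rfl
        rw [hc, hν, Measure.smul_apply, hμK, smul_eq_mul, mul_zero]
      obtain ⟨Cb, hCb⟩ := hK.exists_bound_of_continuousOn hvcont.continuousOn
      have hvint : Integrable (fun x => (fun α : {α : Fin n →₀ ℕ // (∑ i, α i) ≤ d} =>
          ∏ i, x i ^ α.1 i)) ν :=
        ⟨hvcont.aestronglyMeasurable, HasFiniteIntegral.of_bounded (C := Cb)
          (haeK.mono fun x hx => hCb x hx)⟩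
      have hhull : (∫ x, (fun α : {α : Fin n →₀ ℕ // (∑ i, α i) ≤ d} =>
            ∏ i, x i ^ α.1 i) ∂ν) ∈
          convexHull ℝ ((fun x => (fun α : {α : Fin n →₀ ℕ // (∑ i, α i) ≤ d} =>
            ∏ i, x i ^ α.1 i)) '' K) :=
        (convex_convexHull ℝ _).integral_mem
          (aux_isCompact_convexHull (hK.image hvcont)).isClosed
          (haeK.mono fun x hx => subset_convexHull ℝ _ (mem_image_of_mem _ hx)) hvint
      have hcoord : ∀ α : {α : Fin n →₀ ℕ // (∑ i, α i) ≤ d},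
          (∫ x, (fun α : {α : Fin n →₀ ℕ // (∑ i, α i) ≤ d} => ∏ i, x i ^ α.1 i) ∂ν) α
          = ∫ x, ∏ i, x i ^ α.1 i ∂ν := by
        intro α
        exact (ContinuousLinearMap.integral_comp_comm (ContinuousLinearMap.proj (R := ℝ) (φ := fun _ : {α : Fin n →₀ ℕ // (∑ i, α i) ≤ d} => ℝ) α) hvint).symm
      have hMr : 0 < (μ Set.univ).toReal := ENNReal.toReal_pos hμ0 hμtop
      have hmom : ∀ α : {α : Fin n →₀ ℕ // (∑ i, α i) ≤ d},
          ystar α = (μ Set.univ).toReal * ∫ x, ∏ i, x i ^ α.1 i ∂ν := by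
        intro α
        rw [(hμint α).2]
        have hms : μ = (μ Set.univ) • ν := by
          rw [hν, smul_smul, ENNReal.mul_inv_cancel hμ0 hμtop, one_smul]
        conv_lhs => rw [hms]
        rw [integral_smul_measure]
        rfl
      obtain ⟨ι, hι, zf, wt, hrange, _, hwtpos, hwtsum, hsum⟩ :=
        eq_pos_convex_span_of_mem_convexHull hhull
      letI := hι
      have hpre : ∀ i : ι, ∃ x, x ∈ K ∧
          (fun α : {α : Fin n →₀ ℕ // (∑ i, α i) ≤ d} => ∏ j, x j ^ α.1 j) = zf i := by
        intro i
        obtain ⟨x, hx, hxx⟩ := hrange ⟨i, rfl⟩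
        exact ⟨x, hx, hxx⟩
      choose u hu hvu using hpre
      refine ⟨Finset.image u Finset.univ,
        fun p => ∑ i ∈ Finset.univ.filter (fun i => u i = p), (μ Set.univ).toReal * wt i,
        ?_, ?_, ?_⟩
      · intro p hp
        rw [Finset.coe_image] at hp
        obtain ⟨i, _, rfl⟩ := hp
        exact hu i
      · intro p hp
        obtain ⟨i, _, rfl⟩ := Finset.mem_image.1 hp
        exact Finset.sum_pos (fun i' _ => mul_pos hMr (hwtpos i'))
          ⟨i, Finset.mem_filter.2 ⟨Finset.mem_univ _, rfl⟩⟩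
      · intro α
        have h1 : ∑ p ∈ Finset.image u Finset.univ,
            (∑ i ∈ Finset.univ.filter (fun i => u i = p), (μ Set.univ).toReal * wt i)
              * ∏ j, p j ^ α.1 j
            = ∑ p ∈ Finset.image u Finset.univ,
              ∑ i ∈ Finset.univ.filter (fun i => u i = p),
                (μ Set.univ).toReal * wt i * ∏ j, (u i) j ^ α.1 j := by
          refine Finset.sum_congr rfl fun p hp => ?_
          rw [Finset.sum_mul]
          refine Finset.sum_congr rfl fun i hi => ?_
          rw [← (Finset.mem_filter.1 hi).2]
        rw [h1, Finset.sum_fiberwise_of_maps_to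
          (fun i _ => Finset.mem_image_of_mem u (Finset.mem_univ i))]
        rw [hmom α, ← hcoord α, ← hsum]
        rw [Finset.sum_apply, Finset.mul_sum]
        refine Finset.sum_congr rfl fun i _ => ?_
        rw [← hvu i]
        simp only [Pi.smul_apply, smul_eq_mul]
        ring
  -- Step 2 : minimal cardinality representation
  have hex : ∃ N : ℕ, ∃ (S : Finset (Fin n → ℝ)) (w : (Fin n → ℝ) → ℝ), (↑S ⊆ K ∧
      (∀ x ∈ S, 0 < w x) ∧
      ∀ α : {α : Fin n →₀ ℕ // (∑ i, α i) ≤ d},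
        ystar α = ∑ x ∈ S, w x * ∏ i, x i ^ α.1 i) ∧ S.card = N := by
    obtain ⟨S, w, h⟩ := step1; exact ⟨S.card, S, w, h, rfl⟩
  obtain ⟨S, w, ⟨hSK, hwpos, hrep⟩, hScard⟩ := Nat.find_spec hex
  have hmin := fun k (hk : k < Nat.find hex) => Nat.find_min hex hk
  -- Step 3 : the minimal representation has at most m atoms
  have step3 : S.card ≤ m := by
    by_contra hNm
    push_neg at hNm
    -- degrees of support monomials are at most d
    have hαd : ∀ (j : Fin m) (β : Fin n →₀ ℕ), β ∈ (a j).support → (∑ i, β i) ≤ d := by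
      intro j β hβ
      have h1 : (∑ i, β i) = β.sum fun _ e => e :=
        (Finsupp.sum_fintype β (fun _ e => e) (fun _ => rfl)).symm
      rw [h1]
      exact le_trans (MvPolynomial.le_totalDegree hβ) (ha j)
    -- pairing computation
    have hpair : ∀ (g : (Fin n → ℝ) → ℝ) (j : Fin m),
        (∑ β ∈ (a j).support, if h : (∑ i, β i) ≤ d
          then (a j).coeff β * (∑ x ∈ S, g x * ∏ i, x i ^ β i) else 0)
        = ∑ x ∈ S, g x * MvPolynomial.eval x (a j) := by
      intro g j
      rw [Finset.sum_congr rfl (fun β hβ => dif_pos (hαd j β hβ))]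
      have h2 : ∀ β ∈ (a j).support, (a j).coeff β * (∑ x ∈ S, g x * ∏ i, x i ^ β i)
          = ∑ x ∈ S, g x * ((a j).coeff β * ∏ i, x i ^ β i) := by
        intro β _
        rw [Finset.mul_sum]
        exact Finset.sum_congr rfl fun x _ => by ring
      rw [Finset.sum_congr rfl h2, Finset.sum_comm]
      refine Finset.sum_congr rfl fun x _ => ?_
      rw [← Finset.mul_sum, MvPolynomial.eval_eq']
    have hbj : ∀ j, ∑ x ∈ S, w x * MvPolynomial.eval x (a j) = b j := by
      intro j
      rw [← hpair w j, ← hconstr j]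
      refine Finset.sum_congr rfl fun β hβ => ?_
      rw [dif_pos (hαd j β hβ), dif_pos (hαd j β hβ), hrep ⟨β, hαd j β hβ⟩]
    -- a nonzero kernel element
    obtain ⟨c, hcne, hczero⟩ : ∃ c : (↥S → ℝ), c ≠ 0 ∧
        ∀ j, ∑ x ∈ S.attach, c x * MvPolynomial.eval (x : Fin n → ℝ) (a j) = 0 := by
      set M : Matrix (Fin m) ↥S ℝ :=
        Matrix.of fun j x => MvPolynomial.eval (x : Fin n → ℝ) (a j) with hM
      by_contra hno
      push_neg at hno
      have hinj : Function.Injective M.mulVecLin := by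
        rw [injective_iff_map_eq_zero]
        intro c hc
        by_contra hc0
        obtain ⟨j, hj⟩ := hno c hc0
        apply hj
        have h2 : M.mulVecLin c j = ∑ x : ↥S, M j x * c x := by
          simp [Matrix.mulVecLin_apply, Matrix.mulVec, dotProduct]
        have h3 : M.mulVecLin c j = 0 := by rw [hc]; rfl
        rw [h2] at h3
        rw [← h3, Finset.univ_eq_attach]
        exact Finset.sum_congr rfl fun x _ => by rw [mul_comm]; rfl
      have hle := LinearMap.finrank_le_finrank_of_injective hinj
      rw [Module.finrank_pi, Module.finrank_pi] at hle
      simp only [Fintype.card_coe, Fintype.card_fin] at hle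
      omega
    -- extend c to a function on points, zero outside S
    set Cf : (Fin n → ℝ) → ℝ := fun x => if h : x ∈ S then c ⟨x, h⟩ else 0 with hCf
    have hCS : ∀ x : ↥S, Cf (x : Fin n → ℝ) = c x := by
      intro x
      rw [hCf]
      simp only [dif_pos x.2]
    have hTC : ∀ j, ∑ x ∈ S, Cf x * MvPolynomial.eval x (a j) = 0 := by
      intro j
      rw [← Finset.sum_attach S (fun x => Cf x * MvPolynomial.eval x (a j))]
      rw [Finset.sum_congr rfl (fun x _ => by rw [hCS x])]
      exact hczero j
    -- choice of ε
    have hSne : S.Nonempty := Finset.card_pos.1 (lt_of_le_of_lt (Nat.zero_le m) hNm)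
    set ε := S.inf' hSne (fun x => w x / (|Cf x| + 1)) with hε
    have hεpos : 0 < ε := by
      rw [hε, Finset.lt_inf'_iff]
      intro x hx
      exact div_pos (hwpos x hx) (by positivity)
    have hperturb : ∀ t : ℝ, |t| ≤ ε → ∀ x ∈ S, 0 < w x + t * Cf x := by
      intro t ht x hx
      have h1 : |t * Cf x| ≤ ε * |Cf x| := by
        rw [abs_mul]
        exact mul_le_mul_of_nonneg_right ht (abs_nonneg _)
      have h2 : ε ≤ w x / (|Cf x| + 1) := by rw [hε]; exact Finset.inf'_le _ hx
      have h3 : ε * |Cf x| ≤ w x / (|Cf x| + 1) * |Cf x| :=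
        mul_le_mul_of_nonneg_right h2 (abs_nonneg _)
      have h4 : w x / (|Cf x| + 1) * |Cf x| < w x := by
        rw [div_mul_eq_mul_div, div_lt_iff₀ (by positivity)]
        have h5 := hwpos x hx
        nlinarith [abs_nonneg (Cf x)]
      have h6 : |t * Cf x| < w x := lt_of_le_of_lt (le_trans h1 h3) h4
      have h7 := (abs_lt.1 h6).1
      linarith
    -- membership of perturbed sequences in F
    have hmemF : ∀ t : ℝ, (∀ x ∈ S, 0 ≤ w x + t * Cf x) →
        (fun α : {α : Fin n →₀ ℕ // (∑ i, α i) ≤ d} =>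
          ∑ x ∈ S, (w x + t * Cf x) * ∏ i, x i ^ α.1 i) ∈ F := by
      intro t hwt
      rw [hF]
      refine ⟨⟨∑ x ∈ S.attach, ENNReal.ofReal (w ↑x + t * Cf ↑x) • Measure.dirac (↑x : Fin n → ℝ),
        ?_, ?_, ?_⟩, ?_⟩
      · constructor
        rw [Measure.finset_sum_apply]
        rw [ENNReal.sum_lt_top]
        intro x _
        rw [Measure.smul_apply, smul_eq_mul]
        exact ENNReal.mul_lt_top ENNReal.ofReal_lt_top (measure_lt_top _ _)
      · rw [Measure.finset_sum_apply]
        refine Finset.sum_eq_zero fun x _ => ?_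
        rw [Measure.smul_apply, Measure.dirac_apply' _ hK.isClosed.measurableSet.compl]
        have hnot : (↑x : Fin n → ℝ) ∉ Kᶜ := fun hcon => hcon (hSK x.2)
        rw [Set.indicator_of_notMem hnot, smul_zero]
      · intro α
        have hcont : Continuous (fun x : Fin n → ℝ => ∏ i, x i ^ α.1 i) :=
          continuous_finset_prod _ fun i _ => (continuous_apply i).pow _
        have hintx : ∀ x ∈ S.attach, Integrable (fun p : Fin n → ℝ => ∏ i, p i ^ α.1 i)
            (ENNReal.ofReal (w ↑x + t * Cf ↑x) • Measure.dirac (↑x : Fin n → ℝ)) := by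
          intro x _
          refine Integrable.smul_measure ?_ ENNReal.ofReal_ne_top
          refine ⟨hcont.aestronglyMeasurable, ?_⟩
          refine HasFiniteIntegral.of_bounded (C := ‖∏ i, (↑x : Fin n → ℝ) i ^ α.1 i‖) ?_
          rw [MeasureTheory.ae_dirac_eq]
          exact Filter.eventually_pure.2 le_rfl
        constructor
        · exact integrable_finset_sum_measure.2 hintx
        · rw [integral_finset_sum_measure hintx]
          show ∑ x ∈ S, (w x + t * Cf x) * ∏ i, x i ^ α.1 i = _
          rw [← Finset.sum_attach S (fun x => (w x + t * Cf x) * ∏ i, x i ^ α.1 i)]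
          refine Finset.sum_congr rfl fun x _ => ?_
          rw [integral_smul_measure, integral_dirac, ENNReal.toReal_ofReal (hwt ↑x x.2),
            smul_eq_mul]
      · intro j
        have hstep : (∑ β ∈ (a j).support, if h : (∑ i, β i) ≤ d
            then (a j).coeff β * ((fun α : {α : Fin n →₀ ℕ // (∑ i, α i) ≤ d} =>
              ∑ x ∈ S, (w x + t * Cf x) * ∏ i, x i ^ α.1 i) ⟨β, h⟩) else 0)
            = ∑ x ∈ S, (w x + t * Cf x) * MvPolynomial.eval x (a j) := hpair _ j
        rw [hstep]
        have hsplit : ∑ x ∈ S, (w x + t * Cf x) * MvPolynomial.eval x (a j)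
            = (∑ x ∈ S, w x * MvPolynomial.eval x (a j))
              + t * ∑ x ∈ S, Cf x * MvPolynomial.eval x (a j) := by
          rw [Finset.mul_sum, ← Finset.sum_add_distrib]
          exact Finset.sum_congr rfl fun x _ => by ring
        rw [hsplit, hbj j, hTC j, mul_zero, add_zero]
    have hy1 := hmemF ε (fun x hx => (hperturb ε (by rw [abs_of_pos hεpos]) x hx).le)
    have hy2 := hmemF (-ε) (fun x hx => (hperturb (-ε)
      (by rw [abs_neg, abs_of_pos hεpos]) x hx).le)
    have hseg : ystar ∈ openSegment ℝ
        (fun α : {α : Fin n →₀ ℕ // (∑ i, α i) ≤ d} =>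
          ∑ x ∈ S, (w x + ε * Cf x) * ∏ i, x i ^ α.1 i)
        (fun α : {α : Fin n →₀ ℕ // (∑ i, α i) ≤ d} =>
          ∑ x ∈ S, (w x + (-ε) * Cf x) * ∏ i, x i ^ α.1 i) := by
      refine ⟨1/2, 1/2, by norm_num, by norm_num, by norm_num, ?_⟩
      funext α
      simp only [Pi.add_apply, Pi.smul_apply, smul_eq_mul]
      rw [hrep α, Finset.mul_sum, Finset.mul_sum, ← Finset.sum_add_distrib]
      exact Finset.sum_congr rfl fun x _ => by ring
    have h1 := hext hy1 hy2 hseg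
    have hg0 : ∀ α : {α : Fin n →₀ ℕ // (∑ i, α i) ≤ d},
        ∑ x ∈ S, Cf x * ∏ i, x i ^ α.1 i = 0 := by
      intro α
      have h2 := congrFun h1 α
      rw [hrep α] at h2
      have h3 : ε * ∑ x ∈ S, Cf x * ∏ i, x i ^ α.1 i = 0 := by
        rw [Finset.mul_sum]
        have h4 := sub_eq_zero.2 h2
        rw [← Finset.sum_sub_distrib] at h4
        rw [← h4]
        exact Finset.sum_congr rfl fun x _ => by ring
      exact (mul_eq_zero.1 h3).resolve_left (ne_of_gt hεpos)
    have hCex : ∃ x ∈ S, Cf x ≠ 0 := by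
      obtain ⟨s0, hs0⟩ := Function.ne_iff.1 hcne
      exact ⟨↑s0, s0.2, by rw [hCS s0]; exact hs0⟩
    obtain ⟨Df, hDg0, hDneg⟩ : ∃ Df : (Fin n → ℝ) → ℝ,
        (∀ α : {α : Fin n →₀ ℕ // (∑ i, α i) ≤ d},
          ∑ x ∈ S, Df x * ∏ i, x i ^ α.1 i = 0) ∧ ∃ x ∈ S, Df x < 0 := by
      by_cases hneg : ∃ x ∈ S, Cf x < 0
      · exact ⟨Cf, hg0, hneg⟩
      · push_neg at hneg
        refine ⟨fun x => -Cf x, fun α => ?_, ?_⟩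
        · have h5 : ∑ x ∈ S, -Cf x * ∏ i, x i ^ α.1 i
              = -∑ x ∈ S, Cf x * ∏ i, x i ^ α.1 i := by
            rw [← Finset.sum_neg_distrib]
            exact Finset.sum_congr rfl fun x _ => by ring
          rw [h5, hg0 α, neg_zero]
        · obtain ⟨x1, hx1S, hx1⟩ := hCex
          have h6 := hneg x1 hx1S
          exact ⟨x1, hx1S, by simp only [neg_lt_zero]; exact lt_of_le_of_ne h6 (Ne.symm hx1)⟩
    -- reduce the number of atoms
    set Sneg := S.filter (fun x => Df x < 0) with hSneg
    have hSnegne : Sneg.Nonempty := by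
      obtain ⟨x, hxS, hx⟩ := hDneg
      exact ⟨x, Finset.mem_filter.2 ⟨hxS, hx⟩⟩
    set tstar := Sneg.inf' hSnegne (fun x => w x / (-Df x)) with htstar
    obtain ⟨x0, hx0mem, hx0⟩ := Finset.exists_mem_eq_inf' hSnegne (fun x => w x / (-Df x))
    have hx0S : x0 ∈ S := (Finset.mem_filter.1 hx0mem).1
    have hx0neg : Df x0 < 0 := (Finset.mem_filter.1 hx0mem).2
    have htpos : 0 < tstar := by
      rw [htstar, Finset.lt_inf'_iff]
      intro x hx
      have h := Finset.mem_filter.1 hx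
      exact div_pos (hwpos x h.1) (by linarith [h.2])
    have hw'0 : w x0 + tstar * Df x0 = 0 := by
      have hne : Df x0 ≠ 0 := ne_of_lt hx0neg
      rw [htstar, hx0]
      field_simp
      ring
    have hw'nonneg : ∀ x ∈ S, 0 ≤ w x + tstar * Df x := by
      intro x hx
      by_cases hxneg : Df x < 0
      · have hmem2 : x ∈ Sneg := Finset.mem_filter.2 ⟨hx, hxneg⟩
        have h2 : tstar ≤ w x / (-Df x) := by rw [htstar]; exact Finset.inf'_le _ hmem2
        have h3 : tstar * (-Df x) ≤ w x := (le_div_iff₀ (by linarith)).1 h2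
        nlinarith
      · push_neg at hxneg
        have := hwpos x hx
        nlinarith
    have hnew : ∃ (S' : Finset (Fin n → ℝ)) (w' : (Fin n → ℝ) → ℝ), (↑S' ⊆ K ∧
        (∀ x ∈ S', 0 < w' x) ∧
        ∀ α : {α : Fin n →₀ ℕ // (∑ i, α i) ≤ d},
          ystar α = ∑ x ∈ S', w' x * ∏ i, x i ^ α.1 i)
        ∧ S'.card = (S.filter (fun x => w x + tstar * Df x ≠ 0)).card := by
      refine ⟨S.filter (fun x => w x + tstar * Df x ≠ 0), fun x => w x + tstar * Df x,
        ⟨?_, ?_, ?_⟩, rfl⟩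
      · refine subset_trans ?_ hSK
        exact_mod_cast Finset.coe_subset.2 (Finset.filter_subset _ _)
      · intro x hx
        have h := Finset.mem_filter.1 hx
        exact lt_of_le_of_ne (hw'nonneg x h.1) (Ne.symm h.2)
      · intro α
        have hstep2 : ystar α = ∑ x ∈ S, (w x + tstar * Df x) * ∏ i, x i ^ α.1 i := by
          rw [hrep α]
          have h5 : ∑ x ∈ S, (w x + tstar * Df x) * ∏ i, x i ^ α.1 i
              = (∑ x ∈ S, w x * ∏ i, x i ^ α.1 i)
                + tstar * ∑ x ∈ S, Df x * ∏ i, x i ^ α.1 i := by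
            rw [Finset.mul_sum, ← Finset.sum_add_distrib]
            exact Finset.sum_congr rfl fun x _ => by ring
          rw [h5, hDg0 α, mul_zero, add_zero]
        rw [hstep2]
        refine (Finset.sum_filter_of_ne ?_).symm
        intro x _ hne hzero
        exact hne (by rw [hzero, zero_mul])
    obtain ⟨S', w', hrep', hcard'⟩ := hnew
    have hlt : (S.filter (fun x => w x + tstar * Df x ≠ 0)).card < S.card := by
      refine Finset.card_lt_card ?_
      rw [Finset.ssubset_iff_of_subset (Finset.filter_subset _ _)]
      refine ⟨x0, hx0S, ?_⟩
      simp only [Finset.mem_filter, not_and, not_not]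
      exact fun _ => hw'0
    rw [hScard] at hlt
    exact hmin _ hlt ⟨S', w', hrep', hcard'⟩
  -- Step 4 : conclusion
  refine ⟨S.card, step3, fun j => ((S.equivFin.symm j : ↥S) : Fin n → ℝ),
    fun j => w ((S.equivFin.symm j : ↥S) : Fin n → ℝ), ?_, ?_, ?_, ?_⟩
  · exact fun j k h => S.equivFin.symm.injective (Subtype.coe_injective h)
  · exact fun j => hSK (S.equivFin.symm j).2
  · exact fun j => hwpos _ (S.equivFin.symm j).2
  · intro α
    rw [hrep α, ← Finset.sum_coe_sort S (fun x => w x * ∏ i, x i ^ α.1 i)]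
    exact (Equiv.sum_comp S.equivFin.symm
      (fun s : ↥S => w (s : Fin n → ℝ) * ∏ i, (s : Fin n → ℝ) i ^ α.1 i)).symm
end
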